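/- arXiv:1710.07632 — 5 statements merged into one kernel-verified Lean document; each statement's English description precedes it below -/
import Mathlib

section
/- Macaulay's function is strictly monotone: for nonnegative integers a, b and a positive integer d, if a < b then a^{⟨d⟩} < b^{⟨d⟩}. -/
/-- Macaulay's function `a^{⟨d⟩}`: writing `a` in its Macaulay `d`-binomial representation
`a = C(k_d, d) + C(k_{d-1}, d-1) + ⋯ + C(k_j, j)` (computed greedily: `k_d` is the largest
integer with `C(k_d, d) ≤ a`), we set `a^{⟨d⟩} = C(k_d+1, d+1) + ⋯ + C(k_j+1, j+1)`,
and `0^{⟨d⟩} = 0`. -/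
def macaulay : ℕ → ℕ → ℕ
  | _, 0 => 0
  | 0, _ => 0
  | d + 1, a + 1 =>
    let k := Nat.findGreatest (fun k => Nat.choose k (d + 1) ≤ a + 1) (a + d + 2)
    Nat.choose (k + 1) (d + 2) + macaulay d (a + 1 - Nat.choose k (d + 1))

lemma macaulay_succ (d a : ℕ) :
    macaulay (d + 1) (a + 1) =
      Nat.choose (Nat.findGreatest (fun k => Nat.choose k (d + 1) ≤ a + 1) (a + d + 2) + 1)
        (d + 2) +
      macaulay d (a + 1 -
        Nat.choose (Nat.findGreatest (fun k => Nat.choose k (d + 1) ≤ a + 1) (a + d + 2))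
          (d + 1)) := rfl

lemma macaulay_succ2 (d a : ℕ) :
    macaulay (d + 2) (a + 1) =
      Nat.choose (Nat.findGreatest (fun k => Nat.choose k (d + 2) ≤ a + 1) (a + d + 3) + 1)
        (d + 3) +
      macaulay (d + 1) (a + 1 -
        Nat.choose (Nat.findGreatest (fun k => Nat.choose k (d + 2) ≤ a + 1) (a + d + 3))
          (d + 2)) := rfl

lemma choose_lower (d a : ℕ) : a + 1 ≤ Nat.choose (a + d + 1) (d + 1) := by
  induction a with
  | zero => simp
  | succ a ih =>
    have h2 : 1 ≤ Nat.choose (a + d + 1) d := Nat.choose_pos (by omega)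
    have hp : Nat.choose (a + d + 2) (d + 1) =
        Nat.choose (a + d + 1) d + Nat.choose (a + d + 1) (d + 1) :=
      Nat.choose_succ_succ (a + d + 1) d
    have e : a + 1 + d + 1 = a + d + 2 := by omega
    rw [e]
    omega

lemma kfacts (d a : ℕ) :
    d + 1 ≤ Nat.findGreatest (fun k => Nat.choose k (d + 1) ≤ a + 1) (a + d + 2) ∧
    Nat.choose (Nat.findGreatest (fun k => Nat.choose k (d + 1) ≤ a + 1) (a + d + 2)) (d + 1)
      ≤ a + 1 ∧
    a + 1 < Nat.choose
      (Nat.findGreatest (fun k => Nat.choose k (d + 1) ≤ a + 1) (a + d + 2) + 1) (d + 1) := by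
  set P := fun k => Nat.choose k (d + 1) ≤ a + 1 with hP
  have hPd : P (d + 1) := by simp [hP]
  have h1 : d + 1 ≤ Nat.findGreatest P (a + d + 2) :=
    Nat.le_findGreatest (by omega) hPd
  have h2 : P (Nat.findGreatest P (a + d + 2)) :=
    Nat.findGreatest_spec (m := d + 1) (by omega) hPd
  refine ⟨h1, h2, ?_⟩
  by_contra h
  push_neg at h
  have hlt : Nat.findGreatest P (a + d + 2) < a + d + 2 := by
    have hb := Nat.findGreatest_le (P := P) (a + d + 2)
    rcases Nat.lt_or_ge (Nat.findGreatest P (a + d + 2)) (a + d + 2) with h' | h'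
    · exact h'
    · exfalso
      have he : Nat.findGreatest P (a + d + 2) = a + d + 2 := le_antisymm hb h'
      have h2' := h2
      rw [he] at h2'
      have hlow : a + 2 ≤ Nat.choose (a + d + 2) (d + 1) := by
        have := choose_lower d (a + 1)
        simp only [show a + 1 + d + 1 = a + d + 2 by omega] at this
        omega
      simp only [hP] at h2'
      omega
  have := Nat.findGreatest_is_greatest (P := P) (n := a + d + 2)
    (k := Nat.findGreatest P (a + d + 2) + 1) (by omega) (by omega)
  exact this h

/-- Boundedness: if `a < C(n, d)` then `macaulay d a < C(n+1, d+1)`. -/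
lemma macaulay_lt_choose : ∀ d a n : ℕ, a < Nat.choose n d →
    macaulay d a < Nat.choose (n + 1) (d + 1) := by
  intro d
  induction d with
  | zero =>
    intro a n h
    simp only [Nat.choose_zero_right] at h
    interval_cases a
    simp [macaulay, Nat.choose_one_right]
  | succ d ih =>
    intro a n h
    match a with
    | 0 =>
      have hpos : 0 < Nat.choose n (d + 1) := by omega
      have hn : d + 1 ≤ n := by
        by_contra h'
        rw [Nat.choose_eq_zero_of_lt (by omega)] at hpos
        omega
      have h0 : macaulay (d + 1) 0 = 0 := rfl
      rw [h0]
      exact Nat.choose_pos (by omega)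
    | a + 1 =>
      obtain ⟨hk1, hk2, hk3⟩ := kfacts d a
      set k := Nat.findGreatest (fun k => Nat.choose k (d + 1) ≤ a + 1) (a + d + 2) with hkdef
      show Nat.choose (k + 1) (d + 2) + macaulay d (a + 1 - Nat.choose k (d + 1)) <
        Nat.choose (n + 1) (d + 2)
      have hkn : k < n := by
        by_contra h'
        push_neg at h'
        have := Nat.choose_le_choose (d + 1) h'
        omega
      have hp : Nat.choose (k + 1) (d + 1) = Nat.choose k d + Nat.choose k (d + 1) :=
        Nat.choose_succ_succ k d
      have hrem : a + 1 - Nat.choose k (d + 1) < Nat.choose k d := by omega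
      have h4 := ih (a + 1 - Nat.choose k (d + 1)) k hrem
      have hp2 : Nat.choose (k + 2) (d + 2) =
          Nat.choose (k + 1) (d + 1) + Nat.choose (k + 1) (d + 2) :=
        Nat.choose_succ_succ (k + 1) (d + 1)
      have hmono : Nat.choose (k + 2) (d + 2) ≤ Nat.choose (n + 1) (d + 2) :=
        Nat.choose_le_choose (d + 2) (by omega)
      omega

lemma macaulay_one (a : ℕ) : macaulay 1 a = Nat.choose (a + 1) 2 := by
  match a with
  | 0 => simp [macaulay]
  | a + 1 =>
    obtain ⟨hk1, hk2, hk3⟩ := kfacts 0 a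
    set k := Nat.findGreatest (fun k => Nat.choose k 1 ≤ a + 1) (a + 2) with hkdef
    rw [Nat.choose_one_right] at hk2
    rw [Nat.choose_one_right] at hk3
    have hke : k = a + 1 := by omega
    show Nat.choose (k + 1) 2 + macaulay 0 (a + 1 - Nat.choose k 1) = Nat.choose (a + 1 + 1) 2
    rw [hke, Nat.choose_one_right, Nat.sub_self]
    have h0 : macaulay 0 0 = 0 := rfl
    omega

/-- Successor monotonicity. -/
lemma macaulay_succ_lt : ∀ d a : ℕ, macaulay (d + 1) a < macaulay (d + 1) (a + 1) := by
  intro d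
  induction d with
  | zero =>
    intro a
    rw [macaulay_one, macaulay_one]
    have hp : Nat.choose (a + 1 + 1) 2 = Nat.choose (a + 1) 1 + Nat.choose (a + 1) 2 :=
      Nat.choose_succ_succ (a + 1) 1
    have h1 : Nat.choose (a + 1) 1 = a + 1 := Nat.choose_one_right _
    omega
  | succ d ih =>
    intro a
    match a with
    | 0 =>
      have h0 : macaulay (d + 2) 0 = 0 := rfl
      rw [h0, macaulay_succ2 d 0]
      have hk : d + 2 ≤ Nat.findGreatest (fun k => Nat.choose k (d + 2) ≤ 0 + 1) (0 + d + 3) ∧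
          Nat.choose (Nat.findGreatest (fun k => Nat.choose k (d + 2) ≤ 0 + 1) (0 + d + 3))
            (d + 2) ≤ 0 + 1 ∧
          0 + 1 < Nat.choose
            (Nat.findGreatest (fun k => Nat.choose k (d + 2) ≤ 0 + 1) (0 + d + 3) + 1)
            (d + 2) := kfacts (d + 1) 0
      set k := Nat.findGreatest (fun k => Nat.choose k (d + 2) ≤ 0 + 1) (0 + d + 3) with hkdef
      have hpos : 0 < Nat.choose (k + 1) (d + 3) := Nat.choose_pos (by omega)
      omega
    | a + 1 =>
      rw [macaulay_succ2 d a, macaulay_succ2 d (a + 1)]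
      have hks : d + 2 ≤ Nat.findGreatest (fun k => Nat.choose k (d + 2) ≤ a + 1) (a + d + 3) ∧
          Nat.choose (Nat.findGreatest (fun k => Nat.choose k (d + 2) ≤ a + 1) (a + d + 3))
            (d + 2) ≤ a + 1 ∧
          a + 1 < Nat.choose
            (Nat.findGreatest (fun k => Nat.choose k (d + 2) ≤ a + 1) (a + d + 3) + 1)
            (d + 2) := kfacts (d + 1) a
      have hms : d + 2 ≤
            Nat.findGreatest (fun k => Nat.choose k (d + 2) ≤ a + 1 + 1) (a + 1 + d + 3) ∧
          Nat.choose
            (Nat.findGreatest (fun k => Nat.choose k (d + 2) ≤ a + 1 + 1) (a + 1 + d + 3))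
            (d + 2) ≤ a + 1 + 1 ∧
          a + 1 + 1 < Nat.choose
            (Nat.findGreatest (fun k => Nat.choose k (d + 2) ≤ a + 1 + 1) (a + 1 + d + 3) + 1)
            (d + 2) := kfacts (d + 1) (a + 1)
      obtain ⟨hk1, hk2, hk3⟩ := hks
      obtain ⟨hm1, hm2, hm3⟩ := hms
      set k := Nat.findGreatest (fun k => Nat.choose k (d + 2) ≤ a + 1) (a + d + 3) with hkdef
      set m := Nat.findGreatest (fun k => Nat.choose k (d + 2) ≤ a + 1 + 1) (a + 1 + d + 3)
        with hmdef
      have hpk : Nat.choose (k + 1) (d + 2) = Nat.choose k (d + 1) + Nat.choose k (d + 2) :=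
        Nat.choose_succ_succ k (d + 1)
      have hpk2 : Nat.choose (k + 2) (d + 2) =
          Nat.choose (k + 1) (d + 1) + Nat.choose (k + 1) (d + 2) :=
        Nat.choose_succ_succ (k + 1) (d + 1)
      have hposk1 : 0 < Nat.choose (k + 1) (d + 1) := Nat.choose_pos (by omega)
      by_cases hcase : Nat.choose (k + 1) (d + 2) ≤ a + 2
      · -- boundary case: a + 2 = C(k+1, d+2), m = k + 1
        have heq : Nat.choose (k + 1) (d + 2) = a + 2 := by omega
        have hm : m = k + 1 := by
          rcases Nat.lt_trichotomy m (k + 1) with h' | h' | h'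
          · exfalso
            have := Nat.choose_le_choose (d + 2) (show m + 1 ≤ k + 1 by omega)
            omega
          · exact h'
          · exfalso
            have h2 : Nat.choose (k + 2) (d + 2) ≤ Nat.choose m (d + 2) :=
              Nat.choose_le_choose (d + 2) (by omega)
            omega
        rw [hm]
        show Nat.choose (k + 1) (d + 3) + macaulay (d + 1) (a + 1 - Nat.choose k (d + 2)) <
          Nat.choose (k + 2) (d + 3) +
            macaulay (d + 1) (a + 1 + 1 - Nat.choose (k + 1) (d + 2))
        have hsub : a + 1 + 1 - Nat.choose (k + 1) (d + 2) = 0 := by omega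
        rw [hsub]
        have h0 : macaulay (d + 1) 0 = 0 := rfl
        rw [h0]
        have hrem : a + 1 - Nat.choose k (d + 2) < Nat.choose k (d + 1) := by omega
        have hb : macaulay (d + 1) (a + 1 - Nat.choose k (d + 2)) <
            Nat.choose (k + 1) (d + 2) :=
          macaulay_lt_choose (d + 1) (a + 1 - Nat.choose k (d + 2)) k hrem
        have hp3 : Nat.choose (k + 2) (d + 3) =
            Nat.choose (k + 1) (d + 2) + Nat.choose (k + 1) (d + 3) :=
          Nat.choose_succ_succ (k + 1) (d + 2)
        omega
      · -- interior case: m = k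
        push_neg at hcase
        have hm : m = k := by
          rcases Nat.lt_trichotomy m k with h' | h' | h'
          · exfalso
            have := Nat.choose_le_choose (d + 2) (show m + 1 ≤ k by omega)
            omega
          · exact h'
          · exfalso
            have := Nat.choose_le_choose (d + 2) (show k + 1 ≤ m by omega)
            omega
        rw [hm]
        have hsub : a + 1 + 1 - Nat.choose k (d + 2) = (a + 1 - Nat.choose k (d + 2)) + 1 := by
          omega
        rw [hsub]
        have := ih (a + 1 - Nat.choose k (d + 2))
        omega

/-- Macaulay's function is strictly monotone: for nonnegative integers `a`, `b` and a
positive integer `d`, if `a < b` then `a^{⟨d⟩} < b^{⟨d⟩}`. -/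
theorem macaulay_strictMono (a b d : ℕ) (hd : 0 < d) (hab : a < b) :
    macaulay d a < macaulay d b := by
  obtain ⟨d, rfl⟩ : ∃ d', d = d' + 1 := ⟨d - 1, by omega⟩
  have key : ∀ n, macaulay (d + 1) a < macaulay (d + 1) (a + n + 1) := by
    intro n
    induction n with
    | zero => exact macaulay_succ_lt d a
    | succ n ihn => exact ihn.trans (macaulay_succ_lt d (a + n + 1))
  have : b = a + (b - a - 1) + 1 := by omega
  rw [this]
  exact key _
end

section
/- For positive integers a and b and a positive integer d, one has a < b if and only if the Macaulay d-binomial representation of a is strictly smaller than the Macaulay d-binomial representation of b in the (left) lexicographic order. -/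
def mval : ℕ → List ℕ → ℕ
  | _, [] => 0
  | e, k :: t => k.choose e + mval (e-1) t

lemma mval_eq_sum : ∀ (ks : List ℕ) (d : ℕ),
    (∑ i ∈ Finset.range ks.length, Nat.choose (ks.getD i 0) (d - i)) = mval d ks := by
  intro ks
  induction ks with
  | nil => simp [mval]
  | cons k t ih =>
    intro d
    rw [List.length_cons, Finset.sum_range_succ']
    simp only [List.getD_cons_succ, List.getD_cons_zero, Nat.sub_zero, Nat.sub_sub]
    rw [mval]
    rw [add_comm]
    congr 1
    have := ih (d - 1)
    simpa [Nat.sub_sub, Nat.add_comm 1] using this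

lemma chain_head : ∀ (t : List ℕ) (k : ℕ), List.Chain' (· > ·) (k :: t) →
    (k :: t).getLastD 0 + (k :: t).length ≤ k + 1 + 1 - 1 := by
  intro t
  induction t with
  | nil => intro k _; simp
  | cons y t' ih =>
    intro k h
    have hk : y < k := (List.isChain_cons_cons.mp h).1
    have := ih y (List.isChain_cons_cons.mp h).2
    simp only [List.getLastD_cons, List.length_cons] at *
    omega

lemma getLastD_cons_ne (a : ℕ) (l : List ℕ) (h : l ≠ []) :
    (a :: l).getLastD 0 = l.getLastD 0 := by
  cases l with
  | nil => exact absurd rfl h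
  | cons b t => simp only [List.getLastD_cons]

lemma choose_split (k e : ℕ) (he : 1 ≤ e) :
    (k+1).choose e = k.choose e + k.choose (e-1) := by
  obtain ⟨e', rfl⟩ : ∃ e', e = e' + 1 := ⟨e-1, by omega⟩
  rw [Nat.choose_succ_succ, Nat.add_sub_cancel]
  simp only [Nat.succ_eq_add_one]
  omega

lemma mval_zero : ∀ (t : List ℕ) (k e : ℕ), List.Chain' (· > ·) (k :: t) → k < e →
    mval e (k :: t) = 0 := by
  intro t
  induction t with
  | nil =>
    intro k e _ hke
    simp [mval, Nat.choose_eq_zero_of_lt hke]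
  | cons y t' ih =>
    intro k e h hke
    have hk : y < k := (List.isChain_cons_cons.mp h).1
    rw [mval, Nat.choose_eq_zero_of_lt hke, ih y (e-1) (List.isChain_cons_cons.mp h).2 (by omega)]

lemma mval_lt : ∀ (ks : List ℕ) (K e : ℕ), List.Chain' (· > ·) ks → ks.length ≤ e →
    (∀ k, ks.head? = some k → k < K) → e ≤ K → mval e ks < K.choose e := by
  intro ks
  induction ks with
  | nil =>
    intro K e _ _ _ hK
    simpa [mval] using Nat.choose_pos hK
  | cons k t ih =>
    intro K e hch hlen hhd hK
    have hkK : k < K := hhd k rfl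
    have he1 : 1 ≤ e := le_trans (by simp) hlen
    by_cases hke : e - 1 ≤ k
    · have ht : mval (e-1) t < k.choose (e-1) := by
        apply ih k (e-1) hch.tail (by simp at hlen; omega)
        · intro x hx
          cases t with
          | nil => simp at hx
          | cons y t' =>
            simp at hx
            subst hx
            exact (List.isChain_cons_cons.mp hch).1
        · exact hke
      have : mval e (k :: t) < k.choose e + k.choose (e-1) := by
        rw [mval]; omega
      have hid : k.choose e + k.choose (e-1) = (k+1).choose e :=
        (choose_split k e he1).symm
      calc mval e (k :: t) < (k+1).choose e := by omega
        _ ≤ K.choose e := Nat.choose_le_choose e (by omega)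
    · rw [mval_zero t k e hch (by omega)]
      exact Nat.choose_pos hK

lemma head_ge (k : ℕ) (t : List ℕ) (e : ℕ) (hch : List.Chain' (· > ·) (k :: t))
    (hlast : e + 1 ≤ (k :: t).getLastD 0 + (k :: t).length) : e ≤ k := by
  have := chain_head t k hch
  omega

lemma lex_mval : ∀ (ka kb : List ℕ), List.Lex (· < ·) ka kb → ∀ (e : ℕ),
    List.Chain' (· > ·) ka → ka.length ≤ e →
    (ka ≠ [] → e + 1 ≤ ka.getLastD 0 + ka.length) →
    List.Chain' (· > ·) kb → kb.length ≤ e →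
    (kb ≠ [] → e + 1 ≤ kb.getLastD 0 + kb.length) →
    mval e ka < mval e kb := by
  intro ka kb h
  induction h with
  | nil =>
    rename_i b l
    intro e _ _ _ hchb hlenb hlastb
    have hbe : e ≤ b := head_ge b l e hchb (hlastb (by simp))
    have : 0 < b.choose e := Nat.choose_pos hbe
    rw [mval]
    simp [mval]
    omega
  | @rel a l1 b l2 hab =>
    intro e hcha hlena hlasta hchb hlenb hlastb
    have hae : e ≤ a := head_ge a l1 e hcha (hlasta (by simp))
    have he1 : 1 ≤ e := le_trans (by simp) hlena
    have ht : mval (e-1) l1 < a.choose (e-1) := by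
      apply mval_lt l1 a (e-1) hcha.tail (by simp at hlena; omega)
      · intro x hx
        cases l1 with
        | nil => simp at hx
        | cons y t' =>
          simp at hx; subst hx
          exact (List.isChain_cons_cons.mp hcha).1
      · omega
    have hid : a.choose e + a.choose (e-1) = (a+1).choose e :=
      (choose_split a e he1).symm
    have h2 : (a+1).choose e ≤ b.choose e := Nat.choose_le_choose e (by omega)
    have h3 : b.choose e ≤ mval e (b :: l2) := by rw [mval]; omega
    rw [mval]
    omega
  | @cons x l1 l2 hlex ih =>
    intro e hcha hlena hlasta hchb hlenb hlastb
    have he1 : 1 ≤ e := le_trans (by simp) hlena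
    have hih : mval (e-1) l1 < mval (e-1) l2 := by
      apply ih (e-1) hcha.tail (by simp at hlena; omega)
      · intro h1
        have := hlasta (by simp)
        rw [getLastD_cons_ne x l1 h1] at this
        simp only [List.length_cons] at this
        omega
      · exact hchb.tail
      · simp at hlenb; omega
      · intro h2
        have := hlastb (by simp)
        rw [getLastD_cons_ne x l2 h2] at this
        simp only [List.length_cons] at this
        omega
    rw [mval, mval]
    omega

/-- `IsMacaulayRep d a ks` says that the list `ks = [k_d, k_{d-1}, …, k_j]` is a Macaulay
`d`-binomial representation of `a`, i.e. `k_d > k_{d-1} > ⋯ > k_j ≥ j ≥ 1` (where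
`j = d - (length - 1)`) and `a = C(k_d, d) + C(k_{d-1}, d-1) + ⋯ + C(k_j, j)`. -/
def IsMacaulayRep (d a : ℕ) (ks : List ℕ) : Prop :=
  ks ≠ [] ∧ ks.length ≤ d ∧ List.Chain' (· > ·) ks ∧
  d + 1 ≤ ks.getLastD 0 + ks.length ∧
  a = ∑ i ∈ Finset.range ks.length, Nat.choose (ks.getD i 0) (d - i)

/-- For positive integers `a`, `b` and a positive integer `d`, one has `a < b` if and only
if the Macaulay `d`-binomial representation of `a` is strictly smaller than that of `b`
in the (left) lexicographic order (where a longer tuple agreeing on a prefix is larger). -/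
theorem macaulay_rep_lt_iff_lex (a b d : ℕ) (ha : 0 < a) (hb : 0 < b) (hd : 0 < d)
    (ka kb : List ℕ) (hka : IsMacaulayRep d a ka) (hkb : IsMacaulayRep d b kb) :
    a < b ↔ List.Lex (· < ·) ka kb := by
  obtain ⟨hne1, hlen1, hch1, hlast1, hsum1⟩ := hka
  obtain ⟨hne2, hlen2, hch2, hlast2, hsum2⟩ := hkb
  have hav : a = mval d ka := by rw [hsum1, mval_eq_sum]
  have hbv : b = mval d kb := by rw [hsum2, mval_eq_sum]
  constructor
  · intro hab
    rcases lt_trichotomy ka kb with h | h | h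
    · exact h
    · subst h; omega
    · exfalso
      have := lex_mval kb ka h d hch2 hlen2 (fun _ => hlast2)
        hch1 hlen1 (fun _ => hlast1)
      omega
  · intro hlex
    have := lex_mval ka kb hlex d hch1 hlen1 (fun _ => hlast1) hch2 hlen2 (fun _ => hlast2)
    omega
end

section
/- For all positive integers a and d, there exists a unique nonnegative integer c such that a = C(c - 1 + d, d) + A with 0 < A ≤ C(c - 1 + d, d - 1) for some integer A. -/
/-- For all positive integers `a` and `d`, there exists a unique nonnegative integer `c`
such that `a = C(c - 1 + d, d) + A` with `0 < A ≤ C(c - 1 + d, d - 1)` for some `A`.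
(Since `c` may be `0`, the quantity `c - 1 + d` is rendered as `c + d - 1` in `ℕ`.) -/
theorem exists_unique_form_two (a d : ℕ) (ha : 0 < a) (hd : 0 < d) :
    ∃! c : ℕ, ∃ A : ℕ,
      a = Nat.choose (c + d - 1) d + A ∧ 0 < A ∧ A ≤ Nat.choose (c + d - 1) (d - 1) := by
  obtain ⟨e, rfl⟩ : ∃ e, d = e + 1 := ⟨d - 1, (Nat.succ_pred_eq_of_pos hd).symm⟩
  simp only [Nat.add_succ_sub_one, Nat.add_sub_cancel]
  have key : ∀ c, (∃ A, a = Nat.choose (c + e) (e + 1) + A ∧ 0 < A ∧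
      A ≤ Nat.choose (c + e) e) ↔
      Nat.choose (c + e) (e + 1) < a ∧ a ≤ Nat.choose (c + e + 1) (e + 1) := by
    intro c
    rw [Nat.choose_succ_succ]
    simp only [Nat.succ_eq_add_one]
    constructor
    · rintro ⟨A, rfl, hA, hA'⟩; omega
    · rintro ⟨h1, h2⟩
      exact ⟨a - Nat.choose (c + e) (e + 1), by omega, by omega, by omega⟩
  have grow : ∀ c, c + 1 ≤ Nat.choose (c + e + 1) (e + 1) := by
    intro c
    induction c with
    | zero => simp
    | succ n ih =>
      have h0 : Nat.choose (n + e + 1 + 1) (e + 1)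
          = Nat.choose (n + e + 1) e + Nat.choose (n + e + 1) (e + 1) :=
        Nat.choose_succ_succ _ _
      have h1 : 0 < Nat.choose (n + e + 1) e := Nat.choose_pos (by omega)
      have : n + 1 + e + 1 = n + e + 1 + 1 := by ring
      rw [this, h0]
      omega
  have hP : ∃ c, a ≤ Nat.choose (c + e + 1) (e + 1) :=
    ⟨a, (Nat.le_succ a).trans (grow a)⟩
  set c := Nat.find hP with hc
  refine ⟨c, ?_, ?_⟩
  · show ∃ A, a = Nat.choose (c + e) (e + 1) + A ∧ 0 < A ∧ A ≤ Nat.choose (c + e) e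
    rw [key]
    refine ⟨?_, Nat.find_spec hP⟩
    rcases Nat.eq_zero_or_pos c with h0 | h0
    · rw [h0]
      have h9 : Nat.choose (0 + e) (e + 1) = 0 := Nat.choose_eq_zero_of_lt (by omega)
      omega
    · have := Nat.find_min hP (m := c - 1) (by omega)
      push_neg at this
      have heq : c - 1 + e + 1 = c + e := by omega
      rw [heq] at this
      exact this
  · intro c' hc'
    rw [key] at hc'
    obtain ⟨h1, h2⟩ := hc'
    have hle : c ≤ c' := Nat.find_min' hP h2
    by_contra hne
    have hlt : c + 1 ≤ c' := by omega
    have : Nat.choose (c + e + 1) (e + 1) ≤ Nat.choose (c' + e) (e + 1) :=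
      Nat.choose_le_choose _ (by omega)
    have hspec : a ≤ Nat.choose (c + e + 1) (e + 1) := Nat.find_spec hP
    omega
end

section
/- Let m and d be positive integers and let a and b be nonnegative integers with max(a, b) ≤ C(m - 1 + d, d). If c is a positive integer such that a + b ≤ C(m - 1 + d, d) + c, then a^{⟨d⟩} + b^{⟨d⟩} ≤ (C(m - 1 + d, d))^{⟨d⟩} + c^{⟨d⟩}. -/
namespace MacAux

local notation "C" => Nat.choose

lemma mac_zero (d : ℕ) : macaulay d 0 = 0 := by cases d <;> rfl

lemma mac_deg_zero (a : ℕ) : macaulay 0 a = 0 := by cases a <;> rfl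

lemma choose_lt_succ {d k : ℕ} (hd : 1 ≤ d) (hk : d ≤ k) : C k d < C (k+1) d := by
  obtain ⟨d', rfl⟩ : ∃ d', d = d'+1 := ⟨d-1, by omega⟩
  have hPas : C (k+1) (d'+1) = C k d' + C k (d'+1) := Nat.choose_succ_succ k d'
  have : 0 < C k d' := Nat.choose_pos (by omega)
  omega

lemma succ_le_choose {d a : ℕ} (hd : 1 ≤ d) : a + 1 ≤ C (a + d) d := by
  induction d with
  | zero => omega
  | succ d ih =>
    rcases Nat.eq_zero_or_pos d with h | h
    · subst h; simp
    · have h2 := ih h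
      have h3 : a + (d+1) = (a + d) + 1 := by omega
      rw [h3]
      have hPas : C (a+d+1) (d+1) = C (a+d) d + C (a+d) (d+1) := Nat.choose_succ_succ _ _
      omega

/-- diagonal monotonicity: C p e ≤ C (p+i) (e+i) for e ≤ p -/
lemma choose_diag_le {e p : ℕ} (i : ℕ) (h : e ≤ p) : C p e ≤ C (p+i) (e+i) := by
  induction i with
  | zero => exact le_rfl
  | succ i ih =>
    show C p e ≤ C (p+i+1) (e+i+1)
    have hPas : C (p+i+1) (e+i+1) = C (p+i) (e+i) + C (p+i) (e+i+1) := Nat.choose_succ_succ _ _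
    omega

/-- The main unfolding lemma for `macaulay`. -/
lemma mac_eq {d k a : ℕ} (hd : 1 ≤ d) (ha : 1 ≤ a) (h1 : C k d ≤ a) (h2 : a < C (k+1) d) :
    macaulay d a = C (k+1) (d+1) + macaulay (d-1) (a - C k d) := by
  obtain ⟨d', rfl⟩ : ∃ d', d = d'+1 := ⟨d-1, by omega⟩
  obtain ⟨a', rfl⟩ : ∃ a', a = a'+1 := ⟨a-1, by omega⟩
  have hk : Nat.findGreatest (fun j => C j (d'+1) ≤ a'+1) (a' + d' + 2) = k := by
    rw [Nat.findGreatest_eq_iff]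
    have hub : k ≤ a' + d' + 1 := by
      by_contra h
      have hle : C (a' + 1 + (d'+1)) (d'+1) ≤ C k (d'+1) := Nat.choose_le_choose _ (by omega)
      have := succ_le_choose (a := a' + 1) (d := d'+1) (by omega)
      omega
    refine ⟨by omega, fun _ => h1, fun n hn hn2 hP => ?_⟩
    have : C (k+1) (d'+1) ≤ C n (d'+1) := Nat.choose_le_choose _ (by omega)
    omega
  show (let k' := Nat.findGreatest (fun j => C j (d'+1) ≤ a'+1) (a' + d' + 2);
      C (k' + 1) (d' + 2) + macaulay d' (a' + 1 - C k' (d'+1))) = _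
  simp only [hk]
  rfl

/-- existence of the greedy top binomial -/
lemma mac_top {d a : ℕ} (hd : 1 ≤ d) (ha : 1 ≤ a) :
    ∃ p, d ≤ p ∧ C p d ≤ a ∧ a < C (p+1) d := by
  classical
  set P : ℕ → Prop := fun j => C j d ≤ a with hP
  set p := Nat.findGreatest P (a + d) with hp
  have hdp : d ≤ p := Nat.le_findGreatest (by omega) (by simp [P, Nat.choose_self, ha])
  have hspec : P p := Nat.findGreatest_spec (m := d) (by omega) (by simp [P, Nat.choose_self, ha])
  refine ⟨p, hdp, hspec, ?_⟩
  by_cases hpb : p + 1 ≤ a + d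
  · have := Nat.findGreatest_is_greatest (P := P) (n := a+d) (k := p+1) (by omega) hpb
    simpa [P] using this
  · exfalso
    have hpa : a + d ≤ p := by omega
    have h1 : C (a + d) d ≤ C p d := Nat.choose_le_choose _ hpa
    have := succ_le_choose (a := a) (d := d) hd
    simp only [P] at hspec
    omega

lemma mac_I {d k y : ℕ} (hd : 1 ≤ d) (hk : d ≤ k) (hy : y < C k (d-1)) :
    macaulay d (C k d + y) = C (k+1) (d+1) + macaulay (d-1) y := by
  obtain ⟨d', rfl⟩ : ∃ d', d = d'+1 := ⟨d-1, by omega⟩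
  simp only [Nat.add_sub_cancel] at *
  have hPas : C (k+1) (d'+1) = C k d' + C k (d'+1) := Nat.choose_succ_succ k d'
  have hpos : 0 < C k (d'+1) := Nat.choose_pos hk
  rw [mac_eq (d := d'+1) (k := k) (a := C k (d'+1) + y) (by omega) (by omega) (by omega) (by omega)]
  simp only [Nat.add_sub_cancel, Nat.add_sub_cancel_left]

lemma mac_I0 {d k : ℕ} (hd : 1 ≤ d) (hk : d ≤ k) :
    macaulay d (C k d) = C (k+1) (d+1) := by
  have := mac_I (y := 0) hd hk (Nat.choose_pos (by omega))
  simpa [mac_zero] using this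

lemma mac_deg_one (a : ℕ) : macaulay 1 a = C (a+1) 2 := by
  rcases Nat.eq_zero_or_pos a with rfl | ha
  · simp [mac_zero]
  · have := mac_eq (d := 1) (k := a) (a := a) le_rfl ha (by simp) (by simp)
    simpa [mac_deg_zero] using this

lemma mac_one {d : ℕ} (hd : 1 ≤ d) : macaulay d 1 = 1 := by
  have h2 : (1:ℕ) < C (d+1) d := by
    have := choose_lt_succ hd (le_refl d); simpa [Nat.choose_self] using this
  have := mac_eq (d := d) (k := d) (a := 1) hd le_rfl (by simp) h2
  simpa [mac_zero] using this

/-- upper bound: a ≤ C k d → macaulay d a ≤ C (k+1) (d+1) -/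
lemma mac_UB : ∀ d : ℕ, 1 ≤ d → ∀ a k : ℕ, d ≤ k → a ≤ C k d → macaulay d a ≤ C (k+1) (d+1) := by
  intro d
  induction d with
  | zero => omega
  | succ d ih =>
    intro _ a k hk ha
    rcases Nat.eq_zero_or_pos a with rfl | ha1
    · simp [mac_zero]
    obtain ⟨p, hdp, hp1, hp2⟩ := mac_top (d := d+1) (a := a) (by omega) ha1
    rcases eq_or_lt_of_le ha with rfl | halt
    · rw [mac_I0 (by omega) hk]
    have hpk : p < k := by
      by_contra h
      have : C k (d+1) ≤ C p (d+1) := Nat.choose_le_choose _ (by omega)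
      omega
    rw [mac_eq (by omega) ha1 hp1 hp2]
    simp only [Nat.add_sub_cancel]
    have hrem : a - C p (d+1) ≤ C p d := by
      have : C (p+1) (d+1) = C p d + C p (d+1) := Nat.choose_succ_succ p d
      omega
    have hrec : macaulay d (a - C p (d+1)) ≤ C (p+1) (d+1) := by
      rcases Nat.eq_zero_or_pos d with rfl | hd1
      · simp [mac_deg_zero]
      · exact ih hd1 _ p (by omega) hrem
    have hPas : C (p+2) (d+2) = C (p+1) (d+1) + C (p+1) (d+2) := Nat.choose_succ_succ _ _
    have hmono : C (p+2) (d+2) ≤ C (k+1) (d+2) := Nat.choose_le_choose _ (by omega)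
    have he1 : C (p+1) (d+1+1) = C (p+1) (d+2) := rfl
    have he2 : C (k+1) (d+1+1) = C (k+1) (d+2) := rfl
    omega

lemma mac_mono : ∀ d : ℕ, ∀ x y : ℕ, x ≤ y → macaulay d x ≤ macaulay d y := by
  intro d
  induction d with
  | zero => intro x y _; simp [mac_deg_zero]
  | succ d ih =>
    intro x y hxy
    rcases Nat.eq_zero_or_pos x with rfl | hx1
    · simp [mac_zero]
    obtain ⟨p, hdp, hp1, hp2⟩ := mac_top (d := d+1) (a := x) (by omega) hx1
    obtain ⟨q, hdq, hq1, hq2⟩ := mac_top (d := d+1) (a := y) (by omega) (by omega)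
    have hpq : p ≤ q := by
      by_contra h
      have : C (q+1) (d+1) ≤ C p (d+1) := Nat.choose_le_choose _ (by omega)
      omega
    rw [mac_eq (by omega) hx1 hp1 hp2, mac_eq (by omega) (by omega) hq1 hq2]
    simp only [Nat.add_sub_cancel]
    rcases eq_or_lt_of_le hpq with rfl | hplt
    · have := ih (x - C p (d+1)) (y - C p (d+1)) (by omega)
      omega
    · have hrem : x - C p (d+1) ≤ C p d := by
        have : C (p+1) (d+1) = C p d + C p (d+1) := Nat.choose_succ_succ p d
        omega
      have hub : macaulay d (x - C p (d+1)) ≤ C (p+1) (d+1) := by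
        rcases Nat.eq_zero_or_pos d with rfl | hd1
        · simp [mac_deg_zero]
        · exact mac_UB d hd1 _ p (by omega) hrem
      have hPas : C (p+2) (d+2) = C (p+1) (d+1) + C (p+1) (d+2) := Nat.choose_succ_succ _ _
      have hmono : C (p+2) (d+2) ≤ C (q+1) (d+2) := Nat.choose_le_choose _ (by omega)
      have he1 : C (p+1) (d+1+1) = C (p+1) (d+2) := rfl
      have he2 : C (q+1) (d+1+1) = C (q+1) (d+2) := rfl
      omega

end MacAux
-- appended part 2
namespace MacAux

local notation "C" => Nat.choose

lemma pascal (n k : ℕ) : C (n+1) (k+1) = C n k + C n (k+1) := by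
  have := Nat.choose_succ_succ n k
  simpa [Nat.succ_eq_add_one] using this

/-- `K(d,n)`: the key binomial-sum inequality at degree `d`, top `n`. -/
def KK (d n : ℕ) : Prop := ∀ a b c : ℕ, a ≤ C n d → b ≤ C n d → a + b = C n d + c →
  macaulay d a + macaulay d b ≤ C (n+1) (d+1) + macaulay d c

/-- `M'(d,m,·)`: comparison of top increments. -/
def MM (d m : ℕ) : Prop := ∀ e p u : ℕ, 1 ≤ e → e ≤ d → d ≤ m → e ≤ p → m + e ≤ p + d →
  u ≤ C m d → u ≤ C p e →
  C (m+1) (d+1) + macaulay e (C p e - u) ≤ C (p+1) (e+1) + macaulay d (C m d - u)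

/-- superadditivity -/
def SS (d : ℕ) : Prop := ∀ x y : ℕ, macaulay d x + macaulay d y ≤ macaulay d (x + y)

/-- quadratic majorization base fact -/
lemma quad : ∀ s c a : ℕ, c ≤ a → C (c+s+1) 2 + C (a+1) 2 ≤ C (c+1) 2 + C (a+s+1) 2 := by
  intro s
  induction s with
  | zero => intro c a _; simp
  | succ s ih =>
    intro c a hca
    have h1 := ih c a hca
    have e1 : C (c+s+2) 2 = C (c+s+1) 1 + C (c+s+1) 2 := pascal _ _
    have e2 : C (a+s+2) 2 = C (a+s+1) 1 + C (a+s+1) 2 := pascal _ _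
    have e3 : C (c+s+1) 1 = c+s+1 := Nat.choose_one_right _
    have e4 : C (a+s+1) 1 = a+s+1 := Nat.choose_one_right _
    have e5 : c+s+1+1 = c+s+2 := rfl
    have e6 : a+s+1+1 = a+s+2 := rfl
    rw [show c+(s+1)+1 = c+s+2 from by omega, show a+(s+1)+1 = a+s+2 from by omega]
    omega

lemma KK1 (n : ℕ) : KK 1 n := by
  intro a b c ha hb hab
  simp only [Nat.choose_one_right] at ha hb hab
  simp only [mac_deg_one]
  have hn2 : C (n+1) (1+1) = C (n+1) 2 := rfl
  rcases le_total b a with h | h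
  · have hca : c ≤ a := by omega
    have := quad (n - a) c a hca
    rw [show c + (n-a) + 1 = b + 1 from by omega, show a + (n-a) + 1 = n + 1 from by omega] at this
    omega
  · have hcb : c ≤ b := by omega
    have := quad (n - b) c b hcb
    rw [show c + (n-b) + 1 = a + 1 from by omega, show b + (n-b) + 1 = n + 1 from by omega] at this
    omega

lemma MM1 (m : ℕ) : MM 1 m := by
  intro e p u he1 hed hdm hep hmp hu1 hu2
  have he : e = 1 := by omega
  subst he
  simp only [Nat.choose_one_right] at hu1 hu2 ⊢
  simp only [mac_deg_one]
  have hm2 : C (m+1) (1+1) = C (m+1) 2 := rfl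
  have hp2 : C (p+1) (1+1) = C (p+1) 2 := rfl
  have := quad u (m - u) (p - u) (by omega)
  rw [show m - u + u + 1 = m + 1 from by omega, show p - u + u + 1 = p + 1 from by omega] at this
  omega

lemma SS1 : SS 1 := by
  intro x y
  simp only [mac_deg_one]
  induction y with
  | zero => simp
  | succ y ih =>
    have e1 : C (y+1+1) 2 = C (y+1) 1 + C (y+1) 2 := pascal _ _
    have e2 : C (x+(y+1)+1) 2 = C (x+y+1) 1 + C (x+y+1) 2 := by
      rw [show x+(y+1)+1 = (x+y+1)+1 from by omega]; exact pascal _ _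
    have e3 : C (y+1) 1 = y+1 := Nat.choose_one_right _
    have e4 : C (x+y+1) 1 = x+y+1 := Nat.choose_one_right _
    omega

/-- the `R1` identity: rewriting a top increment of degree `d+1`, top `m+1`,
in terms of degree `d`, top `m`, for `u ≤ C m d`. -/
lemma gR1 (d m u : ℕ) (hd : 1 ≤ d) (hdm : d ≤ m) (hu : u ≤ C m d) :
    C (m+2) (d+2) + macaulay d (C m d - u) = C (m+1) (d+1) + macaulay (d+1) (C (m+1) (d+1) - u) := by
  have hPas : C (m+1) (d+1) = C m d + C m (d+1) := Nat.choose_succ_succ m d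
  have hPas2 : C (m+2) (d+2) = C (m+1) (d+1) + C (m+1) (d+2) := Nat.choose_succ_succ _ _
  rcases Nat.eq_zero_or_pos u with rfl | hu1
  · -- u = 0 : both are I0
    have h1 : macaulay d (C m d) = C (m+1) (d+1) := mac_I0 hd hdm
    have h2 : macaulay (d+1) (C (m+1) (d+1)) = C (m+2) (d+2) := mac_I0 (by omega) (by omega)
    simp only [Nat.sub_zero, h1, h2]
    omega
  · rcases eq_or_lt_of_le hdm with rfl | hdm1
    · -- m = d: C m d = 1, u = 1
      have hu' : u = 1 := by
        have : C d d = 1 := Nat.choose_self d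
        omega
      subst hu'
      have e0 : C d d = 1 := Nat.choose_self d
      have e1 : C (d+1) (d+1) = 1 := Nat.choose_self _
      rw [e0, e1]
      simp only [Nat.sub_self, mac_zero]
      have h3 : C (d+1) (d+2) = 0 := Nat.choose_eq_zero_of_lt (by omega)
      have h4 : C d (d+1) = 0 := Nat.choose_eq_zero_of_lt (by omega)
      omega
    · -- d < m, u ≥ 1
      have hI : macaulay (d+1) (C m (d+1) + (C m d - u)) = C (m+1) (d+2) + macaulay d (C m d - u) := by
        have := mac_I (d := d+1) (k := m) (y := C m d - u) (by omega) (by omega) (by simp only [Nat.add_sub_cancel]; omega)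
        simpa only [Nat.add_sub_cancel] using this
      have harg : C (m+1) (d+1) - u = C m (d+1) + (C m d - u) := by omega
      rw [harg, hI]
      have e1 : C (m+1) (d+1+1) = C (m+1) (d+2) := rfl
      omega

end MacAux
-- part 3: the main induction
namespace MacAux

local notation "C" => Nat.choose

theorem level : ∀ d : ℕ, 1 ≤ d → (∀ n, KK d n) ∧ (∀ m, MM d m) ∧ SS d := by
  intro d
  induction d with
  | zero => omega
  | succ d ih =>
    intro _
    rcases Nat.eq_zero_or_pos d with rfl | hd1
    · exact ⟨KK1, MM1, SS1⟩
    obtain ⟨hK, hM, hS⟩ := ih hd1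
    -- LB
    have hLB : ∀ p, d + 1 ≤ p → C (p+1) (d+2) ≤ macaulay d (C p (d+1)) := by
      intro p hp
      induction p, hp using Nat.le_induction with
      | base =>
        have e1 : C (d+1) (d+1) = 1 := Nat.choose_self _
        have e2 : C (d+2) (d+2) = 1 := Nat.choose_self _
        rw [e1, e2, mac_one hd1]
      | succ p hp ihp =>
        have hPas : C (p+1) (d+1) = C p d + C p (d+1) := pascal p d
        have hS' := hS (C p d) (C p (d+1))
        have hI0 : macaulay d (C p d) = C (p+1) (d+1) := mac_I0 hd1 (by omega)
        have hPas2 : C (p+2) (d+2) = C (p+1) (d+1) + C (p+1) (d+2) := pascal _ _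
        have erfl : C (p+1+1) (d+2) = C (p+2) (d+2) := rfl
        rw [hPas]
        omega
    -- E
    have hE : ∀ x, macaulay (d+1) x ≤ macaulay d x := by
      intro x
      rcases Nat.eq_zero_or_pos x with rfl | hx
      · simp [mac_zero]
      obtain ⟨p, hdp, hp1, hp2⟩ := mac_top (d := d+1) (a := x) (by omega) hx
      rw [mac_eq (d := d+1) (by omega) hx hp1 hp2]
      simp only [Nat.add_sub_cancel]
      have hLB' := hLB p hdp
      have hS' := hS (C p (d+1)) (x - C p (d+1))
      have harg : C p (d+1) + (x - C p (d+1)) = x := by omega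
      rw [harg] at hS'
      have he : C (p+1) (d+1+1) = C (p+1) (d+2) := rfl
      omega
    -- joint KK/MM by strong induction on n
    have hKM : ∀ n, KK (d+1) n ∧ MM (d+1) n := by
      intro n
      induction n using Nat.strong_induction_on with
      | _ n ihn =>
      -- first: KK (d+1) n
      have hKn : KK (d+1) n := by
        intro a b c ha hb hab
        by_cases hn1 : n < d + 1
        · have h0 : C n (d+1) = 0 := Nat.choose_eq_zero_of_lt hn1
          obtain rfl : a = 0 := by omega
          obtain rfl : b = 0 := by omega
          obtain rfl : c = 0 := by omega
          simp [mac_zero]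
        push_neg at hn1
        by_cases hn2 : n = d + 1
        · subst hn2
          have h1 : C (d+1) (d+1) = 1 := Nat.choose_self _
          have h2 : C (d+2) (d+2) = 1 := Nat.choose_self _
          have e2 : C (d+1+1) (d+1+1) = 1 := h2
          rw [h1] at ha hb hab
          have m0 : macaulay (d+1) 0 = 0 := mac_zero _
          have m1 : macaulay (d+1) 1 = 1 := mac_one (by omega)
          have ha1 : a = 0 ∨ a = 1 := by omega
          have hb1 : b = 0 ∨ b = 1 := by omega
          rcases ha1 with rfl | rfl <;> rcases hb1 with rfl | rfl
          · omega
          · obtain rfl : c = 0 := by omega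
            omega
          · obtain rfl : c = 0 := by omega
            omega
          · obtain rfl : c = 1 := by omega
            omega
        -- main case : n ≥ d+2
        have hn3 : d + 2 ≤ n := by omega
        obtain ⟨n', rfl⟩ : ∃ n', n = n' + 1 := ⟨n - 1, by omega⟩
        have hn' : d + 1 ≤ n' := by omega
        have hPasN : C (n'+1) (d+1) = C n' d + C n' (d+1) := pascal _ _
        have hPasTop : C (n'+2) (d+2) = C (n'+1) (d+1) + C (n'+1) (d+2) := pascal _ _
        have hfN : macaulay (d+1) (C (n'+1) (d+1)) = C (n'+2) (d+2) := mac_I0 (by omega) (by omega)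
        obtain ⟨hKn', hMn'⟩ := ihn n' (by omega)
        have hKd : KK d n' := hK n'
        have erfl1 : C (n'+1+1) (d+1+1) = C (n'+2) (d+2) := rfl
        have erfl2 : C (n'+1) (d+1+1) = C (n'+1) (d+2) := rfl
        have main : ∀ a b c : ℕ, b ≤ a → a ≤ C (n'+1) (d+1) → b ≤ C (n'+1) (d+1) →
            a + b = C (n'+1) (d+1) + c →
            macaulay (d+1) a + macaulay (d+1) b ≤ C (n'+1+1) (d+1+1) + macaulay (d+1) c := by
          intro a b c hba ha hb hab
          rw [erfl1]
          rcases eq_or_lt_of_le ha with rfl | haN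
          · obtain rfl : c = b := by omega
            omega
          rcases le_or_gt (C n' (d+1)) b with hbN' | hbN'
          · -- Case A
            obtain ⟨α, rfl⟩ : ∃ α, a = C n' (d+1) + α := ⟨a - C n' (d+1), by omega⟩
            obtain ⟨β, rfl⟩ : ∃ β, b = C n' (d+1) + β := ⟨b - C n' (d+1), by omega⟩
            have hαM : α < C n' d := by omega
            have hfa : macaulay (d+1) (C n' (d+1) + α) = C (n'+1) (d+2) + macaulay d α := by
              have := mac_I (d := d+1) (k := n') (y := α) (by omega) (by omega)
                (by simpa only [Nat.add_sub_cancel] using hαM)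
              simpa only [Nat.add_sub_cancel] using this
            have hfb : macaulay (d+1) (C n' (d+1) + β) = C (n'+1) (d+2) + macaulay d β := by
              have := mac_I (d := d+1) (k := n') (y := β) (by omega) (by omega)
                (by simp only [Nat.add_sub_cancel]; omega)
              simpa only [Nat.add_sub_cancel] using this
            have hkey : C n' (d+1) + (α + β) = C n' d + c := by omega
            rcases le_or_gt (C n' d) (α + β) with hMs | hMs
            · -- A1
              obtain ⟨γ, hγ⟩ : ∃ γ, α + β = C n' d + γ := ⟨α + β - C n' d, by omega⟩
              have hγM : γ < C n' d := by omega
              obtain rfl : c = C n' (d+1) + γ := by omega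
              have hfc : macaulay (d+1) (C n' (d+1) + γ) = C (n'+1) (d+2) + macaulay d γ := by
                have := mac_I (d := d+1) (k := n') (y := γ) (by omega) (by omega)
                  (by simp only [Nat.add_sub_cancel]; omega)
                simpa only [Nat.add_sub_cancel] using this
              have hKd' := hKd α β γ (by omega) (by omega) (by omega)
              rw [hfa, hfb, hfc]
              omega
            · -- A2
              have hcu : c + (C n' d - (α + β)) = C n' (d+1) := by omega
              have hMM := hMn' d n' (C n' d - (α + β)) (by omega) (by omega) (by omega)
                (by omega) (by omega) (by omega) (by omega)
              have harg1 : C n' d - (C n' d - (α + β)) = α + β := by omega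
              have harg2 : C n' (d+1) - (C n' d - (α + β)) = c := by omega
              rw [harg1, harg2] at hMM
              have hSd := hS α β
              rw [hfa, hfb]
              omega
          · -- Case B
            rcases le_or_gt (C n' (d+1)) a with haN' | haN'
            · -- B1
              obtain ⟨α, rfl⟩ : ∃ α, a = C n' (d+1) + α := ⟨a - C n' (d+1), by omega⟩
              have hαM : α < C n' d := by omega
              have hbc : b = c + (C n' d - α) := by omega
              have hfa : macaulay (d+1) (C n' (d+1) + α) = C (n'+1) (d+2) + macaulay d α := by
                have := mac_I (d := d+1) (k := n') (y := α) (by omega) (by omega)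
                  (by simpa only [Nat.add_sub_cancel] using hαM)
                simpa only [Nat.add_sub_cancel] using this
              have huN : C n' d - α ≤ C n' (d+1) := by omega
              have hKapp := hKn' (C n' (d+1) - (C n' d - α)) b c (by omega) (by omega) (by omega)
              have hMM := hMn' d n' (C n' d - α) (by omega) (by omega) (by omega)
                (by omega) (by omega) (by omega) (by omega)
              have harg : C n' d - (C n' d - α) = α := by omega
              rw [harg] at hMM
              rw [hfa]
              omega
            · -- B2
              have hc2 : a + b = C n' (d+1) + (C n' d + c) := by omega
              have hc2N : C n' d + c < C n' (d+1) := by omega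
              have hK1 := hKn' a b (C n' d + c) (by omega) (by omega) hc2
              have hK2 := hKn' (C n' (d+1) - C n' d) (C n' d + c) c (by omega) (by omega) (by omega)
              have hMM := hMn' d n' (C n' d) (by omega) (by omega) (by omega)
                (by omega) (by omega) (by omega) (by omega)
              rw [Nat.sub_self, mac_zero] at hMM
              omega
        rcases le_total b a with h | h
        · exact main a b c h ha hb hab
        · have := main b a c h hb ha (by omega)
          omega
      -- second: MM (d+1) n
      have hMn : ∀ p u e : ℕ, 1 ≤ e → e ≤ d+1 → d+1 ≤ n → e ≤ p → n + e ≤ p + (d+1) →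
          u ≤ C n (d+1) → u ≤ C p e →
          C (n+1) (d+1+1) + macaulay e (C p e - u) ≤ C (p+1) (e+1) + macaulay (d+1) (C n (d+1) - u) := by
        intro p
        induction p using Nat.strong_induction_on with
        | _ p ihp =>
        intro u
        induction u using Nat.strong_induction_on with
        | _ u ihu =>
        intro e he1 hed hdm hep hmp hu1 hu2
        have erfl0 : C (n+1) (d+1+1) = C (n+1) (d+2) := rfl
        rcases Nat.eq_zero_or_pos u with rfl | hu0
        · simp only [Nat.sub_zero]
          have h1 : macaulay e (C p e) = C (p+1) (e+1) := mac_I0 he1 hep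
          have h2 : macaulay (d+1) (C n (d+1)) = C (n+1) (d+2) := mac_I0 (by omega) hdm
          omega
        by_cases hrefl : e = d+1 ∧ p = n
        · obtain ⟨rfl, rfl⟩ := hrefl
          omega
        obtain ⟨n₀, rfl⟩ : ∃ n₀, n = n₀ + 1 := ⟨n - 1, by omega⟩
        have hn₀ : d ≤ n₀ := by omega
        have hA1 : 1 ≤ C n₀ d := Nat.choose_pos hn₀
        rcases le_or_gt u (C n₀ d) with huA | huA
        · -- C1 : u ≤ A
          have hR := gR1 d n₀ u hd1 hn₀ huA
          rcases eq_or_lt_of_le hed with heq | hlt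
          · -- C1b : e = d+1
            subst heq
            have hpn : n₀ + 2 ≤ p := by
              rcases eq_or_lt_of_le (show n₀ + 1 ≤ p by omega) with h | h
              · exact absurd ⟨rfl, h.symm⟩ hrefl
              · omega
            obtain ⟨p₀, rfl⟩ : ∃ p₀, p = p₀ + 1 := ⟨p - 1, by omega⟩
            have hup₀ : u ≤ C p₀ d := le_trans huA (Nat.choose_le_choose _ (by omega))
            have hRp := gR1 d p₀ u hd1 (by omega) hup₀
            have hMd := hM n₀ d p₀ u hd1 le_rfl hn₀ (by omega) (by omega) huA hup₀
            have erfl1 : C (n₀+1+1) (d+1+1) = C (n₀+2) (d+2) := rfl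
            have erfl2 : C (p₀+1+1) (d+1+1) = C (p₀+2) (d+2) := rfl
            omega
          · -- C1a : e ≤ d
            have hMd := hM n₀ e p u he1 (by omega) hn₀ hep (by omega) huA hu2
            have erfl1 : C (n₀+1+1) (d+1+1) = C (n₀+2) (d+2) := rfl
            omega
        · -- C2 : u > A
          have hnd : d + 2 ≤ n₀ + 1 := by
            by_contra h
            have hn0d : n₀ = d := by omega
            have h1 : C (n₀+1) (n₀+1) = 1 := Nat.choose_self _
            have h2 : C n₀ n₀ = 1 := Nat.choose_self _
            rw [← hn0d] at hu1 huA
            omega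
          have hstrict : n₀ + 1 + e + 1 ≤ p + (d + 1) := by
            by_contra h
            have heq : n₀ + 1 + e = p + (d + 1) := by omega
            have hed' : e ≤ d := by
              rcases eq_or_lt_of_le hed with h' | h'
              · exfalso; exact hrefl ⟨h', by omega⟩
              · omega
            have hdiag := choose_diag_le (e := e) (p := p) (d - e) hep
            rw [show p + (d - e) = n₀ from by omega, show e + (d - e) = d from by omega] at hdiag
            omega
          have hpe : e < p := by
            by_contra h
            have : p = e := by omega
            subst this
            have : C p p = 1 := Nat.choose_self _
            omega
          obtain ⟨p₀, rfl⟩ : ∃ p₀, p = p₀ + 1 := ⟨p - 1, by omega⟩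
          obtain ⟨e₀, rfl⟩ : ∃ e₀, e = e₀ + 1 := ⟨e - 1, by omega⟩
          have hPasE : C (p₀+1) (e₀+1) = C p₀ e₀ + C p₀ (e₀+1) := pascal _ _
          rcases le_or_gt u (C p₀ e₀) with huB | huB
          · -- C2a : u ≤ B
            have he₀ : 1 ≤ e₀ := by
              by_contra h
              have : e₀ = 0 := by omega
              subst this
              have : C p₀ 0 = 1 := Nat.choose_zero_right _
              omega
            have hRp := gR1 e₀ p₀ u he₀ (by omega) huB
            have hrec := ihp p₀ (by omega) u e₀ he₀ (by omega) hdm (by omega) (by omega) hu1 huB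
            have erfl1 : C (p₀+1+1) (e₀+1+1) = C (p₀+2) (e₀+2) := rfl
            omega
          · -- C2b : u > B
            have h1 := ihp p₀ (by omega) (u - C p₀ e₀) (e₀+1) he1 hed hdm (by omega) (by omega)
              (by omega) (by omega)
            have harg1 : C p₀ (e₀+1) - (u - C p₀ e₀) = C (p₀+1) (e₀+1) - u := by omega
            rw [harg1] at h1
            have h2 := hKn (C (n₀+1) (d+1) - C p₀ e₀) (C (n₀+1) (d+1) - (u - C p₀ e₀))
              (C (n₀+1) (d+1) - u) (by omega) (by omega) (by omega)
            have h3 := ihu (C p₀ e₀) (by omega) (e₀+1) he1 hed hdm hep hmp (by omega) (by omega)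
            have harg2 : C (p₀+1) (e₀+1) - C p₀ e₀ = C p₀ (e₀+1) := by omega
            rw [harg2] at h3
            have hI0B : macaulay (e₀+1) (C p₀ (e₀+1)) = C (p₀+1) (e₀+2) := mac_I0 (by omega) (by omega)
            rw [hI0B] at h3
            have hPasTopE : C (p₀+2) (e₀+2) = C (p₀+1) (e₀+1) + C (p₀+1) (e₀+2) := pascal _ _
            have harg3 : C (n₀+1) (d+1) - (u - C p₀ e₀) = C (n₀+1) (d+1) - u + C p₀ e₀ := by omega
            have erfl1 : C (p₀+1+1) (e₀+1+1) = C (p₀+2) (e₀+2) := rfl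
            have erfl2 : C (p₀+1) (e₀+1+1) = C (p₀+1) (e₀+2) := rfl
            have erfl3 : C (n₀+1+1) (d+1+1) = C (n₀+2) (d+2) := rfl
            rw [harg3] at h1 h2
            omega
      have hMn' : MM (d+1) n := fun e p u he1 hed hdm hep hmp hu1 hu2 =>
        hMn p u e he1 hed hdm hep hmp hu1 hu2
      exact ⟨hKn, hMn'⟩
    -- SS (d+1)
    have hSn : SS (d+1) := by
      have main : ∀ x y : ℕ, x ≤ y →
          macaulay (d+1) x + macaulay (d+1) y ≤ macaulay (d+1) (x + y) := by
        intro x y hxy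
        rcases Nat.eq_zero_or_pos x with rfl | hx
        · simp [mac_zero]
        obtain ⟨k, hdk, hk1, hk2⟩ := mac_top (d := d+1) (a := x + y) (by omega) (by omega)
        have hPas : C (k+1) (d+1) = C k d + C k (d+1) := pascal _ _
        have hfs : macaulay (d+1) (x + y) = C (k+1) (d+2) + macaulay d (x + y - C k (d+1)) := by
          have := mac_eq (d := d+1) (k := k) (a := x + y) (by omega) (by omega) hk1 hk2
          simpa only [Nat.add_sub_cancel] using this
        rcases le_or_gt (C k (d+1)) y with hy | hy
        · have hfy : macaulay (d+1) y = C (k+1) (d+2) + macaulay d (y - C k (d+1)) := by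
            have := mac_eq (d := d+1) (k := k) (a := y) (by omega) (by omega) hy (by omega)
            simpa only [Nat.add_sub_cancel] using this
          have hEx := hE x
          have hSd := hS x (y - C k (d+1))
          have harg : x + (y - C k (d+1)) = x + y - C k (d+1) := by omega
          rw [harg] at hSd
          rw [hfs, hfy]
          omega
        · have hKapp := (hKM k).1 x y (x + y - C k (d+1)) (by omega) (by omega) (by omega)
          have hEσ := hE (x + y - C k (d+1))
          have erfl1 : C (k+1) (d+1+1) = C (k+1) (d+2) := rfl
          rw [hfs]
          omega
      intro x y
      rcases le_total x y with h | h
      · exact main x y h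
      · have := main y x h
        rw [show y + x = x + y from by omega] at this
        omega
    exact ⟨fun n => (hKM n).1, fun m => (hKM m).2, hSn⟩

end MacAux
/-- Let `m`, `d` be positive integers and `a`, `b` nonnegative integers with
`max a b ≤ C(m - 1 + d, d)`. If `c` is a positive integer with
`a + b ≤ C(m - 1 + d, d) + c`, then
`a^{⟨d⟩} + b^{⟨d⟩} ≤ (C(m - 1 + d, d))^{⟨d⟩} + c^{⟨d⟩}`. -/
theorem macaulay_sum_le (m d a b c : ℕ) (hm : 0 < m) (hd : 0 < d) (hc : 0 < c)
    (hab : max a b ≤ Nat.choose (m - 1 + d) d)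
    (hsum : a + b ≤ Nat.choose (m - 1 + d) d + c) :
    macaulay d a + macaulay d b ≤ macaulay d (Nat.choose (m - 1 + d) d) + macaulay d c := by
  obtain ⟨hK, hM, hS⟩ := MacAux.level d hd
  set n := m - 1 + d with hn
  have hdn : d ≤ n := by omega
  have hfN : macaulay d (Nat.choose n d) = Nat.choose (n+1) (d+1) := MacAux.mac_I0 hd hdn
  have ha : a ≤ Nat.choose n d := le_trans (le_max_left _ _) hab
  have hb : b ≤ Nat.choose n d := le_trans (le_max_right _ _) hab
  rcases le_or_gt (a + b) (Nat.choose n d) with h | h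
  · have h1 := hS a b
    have h2 := MacAux.mac_mono d (a + b) (Nat.choose n d) h
    have h3 : 0 ≤ macaulay d c := Nat.zero_le _
    omega
  · have hc0 : a + b = Nat.choose n d + (a + b - Nat.choose n d) := by omega
    have hK' := hK n a b (a + b - Nat.choose n d) ha hb hc0
    have hmono := MacAux.mac_mono d (a + b - Nat.choose n d) c (by omega)
    omega
end

section
/- Let m and d be positive integers. Suppose a_1 ≤ a_2 ≤ ... ≤ a_t and b_1, b_2, ..., b_s are sequences of nonnegative integers such that b_1 ≤ b_2 = b_3 = ... = b_s = C(m - 1 + d, d) and b_s ≥ a_i for all i ≤ t. If a_1 + ... + a_t ≤ b_1 + ... + b_s, then a_1^{⟨d⟩} + ... + a_t^{⟨d⟩} ≤ b_1^{⟨d⟩} + ... + b_s^{⟨d⟩}. -/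
lemma mac_zero (d : ℕ) : macaulay d 0 = 0 := by cases d <;> rfl

lemma le_choose_add (k d : ℕ) : k ≤ Nat.choose k (d+1) + d := by
  induction k with
  | zero => omega
  | succ k ih =>
    rcases le_or_gt d k with h | h
    · have h1 : 0 < Nat.choose k d := Nat.choose_pos h
      have h2 : Nat.choose (k+1) (d+1) = Nat.choose k d + Nat.choose k (d+1) :=
        Nat.choose_succ_succ k d
      omega
    · omega

lemma mac_eq (d k r : ℕ) (hk : d ≤ k) (hr : r < Nat.choose k d) :
    macaulay (d+1) (Nat.choose k (d+1) + r) = Nat.choose (k+1) (d+2) + macaulay d r := by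
  rcases Nat.eq_or_lt_of_le hk with rfl | hk'
  · have h0 : Nat.choose d (d+1) = 0 := Nat.choose_eq_zero_of_lt (Nat.lt_succ_self d)
    have hr0 : r = 0 := by
      have := Nat.choose_self d
      omega
    have h1 : Nat.choose (d+1) (d+2) = 0 := Nat.choose_eq_zero_of_lt (Nat.lt_succ_self _)
    simp [h0, hr0, h1, mac_zero]
  · have hv : 1 ≤ Nat.choose k (d+1) := Nat.choose_pos hk'
    obtain ⟨a, ha⟩ : ∃ a, Nat.choose k (d+1) + r = a + 1 := ⟨Nat.choose k (d+1) + r - 1, by omega⟩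
    have hfg : Nat.findGreatest (fun j => Nat.choose j (d+1) ≤ a + 1) (a + d + 2) = k := by
      rw [Nat.findGreatest_eq_iff]
      refine ⟨?_, ?_, ?_⟩
      · have := le_choose_add k d; omega
      · intro _; show Nat.choose k (d+1) ≤ a + 1; omega
      · intro j hj hj2 hP
        have hP' : Nat.choose j (d+1) ≤ a + 1 := hP
        have h1 : Nat.choose (k+1) (d+1) ≤ Nat.choose j (d+1) := Nat.choose_le_choose _ hj
        have h2 : Nat.choose (k+1) (d+1) = Nat.choose k d + Nat.choose k (d+1) :=
          Nat.choose_succ_succ k d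
        omega
    rw [ha]
    show (let k' := Nat.findGreatest (fun j => Nat.choose j (d+1) ≤ a + 1) (a + d + 2);
      Nat.choose (k' + 1) (d + 2) + macaulay d (a + 1 - Nat.choose k' (d + 1))) = _
    rw [hfg]
    show Nat.choose (k + 1) (d + 2) + macaulay d (a + 1 - Nat.choose k (d + 1)) = _
    have hra : a + 1 - Nat.choose k (d+1) = r := by omega
    rw [hra]

lemma exists_rep (d v : ℕ) (hv : 1 ≤ v) :
    ∃ k r, d + 1 ≤ k ∧ r < Nat.choose k d ∧ v = Nat.choose k (d+1) + r := by
  set P : ℕ → Prop := fun j => Nat.choose j (d+1) ≤ v with hP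
  set k := Nat.findGreatest P (v + d + 1) with hkdef
  have h1 : P (d+1) := by simp [hP, Nat.choose_self, hv]
  have hk1 : d + 1 ≤ k := Nat.le_findGreatest (by omega) h1
  have hk2 : Nat.choose k (d+1) ≤ v := Nat.findGreatest_spec (by omega) h1
  have hkb : k ≤ v + d + 1 := Nat.findGreatest_le _
  have hup : v < Nat.choose (k+1) (d+1) := by
    rcases le_or_gt (k+1) (v + d + 1) with h | h
    · by_contra hcon
      have hg : Nat.findGreatest P (v + d + 1) < k + 1 := by omega
      exact Nat.findGreatest_is_greatest hg h (by simpa [hP] using not_lt.mp hcon)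
    · have hk' : k = v + d + 1 := by omega
      have := le_choose_add k d
      omega
  have h2 : Nat.choose (k+1) (d+1) = Nat.choose k d + Nat.choose k (d+1) :=
    Nat.choose_succ_succ k d
  exact ⟨k, v - Nat.choose k (d+1), hk1, by omega, by omega⟩

lemma mac_pure (d k : ℕ) (hd : 1 ≤ d) (hk : d ≤ k) :
    macaulay d (Nat.choose k d) = Nat.choose (k+1) (d+1) := by
  obtain ⟨e, rfl⟩ : ∃ e, d = e + 1 := ⟨d - 1, by omega⟩
  have := mac_eq e k 0 (by omega) (Nat.choose_pos (by omega))
  simpa [mac_zero] using this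

lemma mac_one (v : ℕ) : macaulay 1 v = Nat.choose (v+1) 2 := by
  have := mac_eq 0 v 0 (Nat.zero_le v) (by simp [Nat.choose_zero_right])
  simpa [mac_zero, Nat.choose_one_right] using this

lemma two_mul_choose_two (n : ℕ) : 2 * Nat.choose (n+1) 2 = (n+1) * n := by
  rw [Nat.choose_two_right]
  simp only [Nat.add_sub_cancel]
  refine Nat.mul_div_cancel' ?_
  have := (Nat.even_mul_succ_self n).two_dvd
  rwa [mul_comm] at this

def StmtA (l : ℕ) : Prop := ∀ x y, macaulay l x + macaulay l y ≤ macaulay l (x + y)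

def StmtB (l : ℕ) : Prop := ∀ n x y z, x ≤ Nat.choose n l → y ≤ Nat.choose n l →
  z + Nat.choose n l = x + y →
  macaulay l x + macaulay l y ≤ macaulay l z + macaulay l (Nat.choose n l)

lemma A1 : StmtA 1 := by
  intro x y
  simp only [mac_one]
  have e1 := two_mul_choose_two x
  have e2 := two_mul_choose_two y
  have e3 := two_mul_choose_two (x+y)
  nlinarith

lemma B1 : StmtB 1 := by
  intro n x y z hx hy hz
  simp only [mac_one, Nat.choose_one_right] at *
  have e1 := two_mul_choose_two x
  have e2 := two_mul_choose_two y
  have e3 := two_mul_choose_two z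
  have e4 := two_mul_choose_two n
  nlinarith

lemma Dlem (l n : ℕ) (hl : 1 ≤ l) (hA : StmtA l) (hB : StmtB l) :
    ∀ x z s c, 1 ≤ c → s + c = Nat.choose n l → x = z + c → x ≤ Nat.choose n (l+1) + s →
      macaulay (l+1) x + macaulay l s ≤ macaulay (l+1) z + macaulay l (Nat.choose n l) := by
  intro x
  induction x using Nat.strong_induction_on with
  | _ x IH =>
  intro z s c hc hsc hxz hxle
  have hM1 : 1 ≤ Nat.choose n l := by omega
  have hnl : l ≤ n := by
    by_contra h
    have : Nat.choose n l = 0 := Nat.choose_eq_zero_of_lt (by omega)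
    omega
  have hx1 : 1 ≤ x := by omega
  obtain ⟨k, r, hk, hr, hrep⟩ := exists_rep l x hx1
  have hkn : k ≤ n := by
    by_contra h
    have h1 : Nat.choose (n+1) (l+1) ≤ Nat.choose k (l+1) := Nat.choose_le_choose _ (by omega)
    have h2 : Nat.choose (n+1) (l+1) = Nat.choose n l + Nat.choose n (l+1) :=
      Nat.choose_succ_succ n l
    omega
  have hmx : macaulay (l+1) x = Nat.choose (k+1) (l+2) + macaulay l r := by
    rw [hrep]; exact mac_eq l k r (by omega) hr
  have hCkn : Nat.choose k l ≤ Nat.choose n l := Nat.choose_le_choose _ hkn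
  rcases le_or_gt c r with hcr | hcr
  · -- subcase r ≥ c
    have hz : z = Nat.choose k (l+1) + (r - c) := by omega
    have hmz : macaulay (l+1) z = Nat.choose (k+1) (l+2) + macaulay l (r - c) := by
      rw [hz]; exact mac_eq l k (r-c) (by omega) (by omega)
    have hBapp := hB n r s (r - c) (by omega) (by omega) (by omega)
    omega
  · -- subcase r < c
    obtain ⟨k', rfl⟩ : ∃ k', k = k' + 1 := ⟨k - 1, by omega⟩
    have hk'l : l ≤ k' := by omega
    have hsplit : Nat.choose (k'+1) (l+1) = Nat.choose k' l + Nat.choose k' (l+1) :=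
      Nat.choose_succ_succ k' l
    have hsplit2 : Nat.choose (k'+1+1) (l+2) = Nat.choose (k'+1) (l+1) + Nat.choose (k'+1) (l+2) :=
      Nat.choose_succ_succ (k'+1) (l+1)
    have hCk'pos : 0 < Nat.choose k' l := Nat.choose_pos hk'l
    have hCk'n : Nat.choose k' l ≤ Nat.choose n l := Nat.choose_le_choose _ (by omega)
    have hpure : macaulay l (Nat.choose k' l) = Nat.choose (k'+1) (l+1) := mac_pure l k' hl hk'l
    have hA1 := hA r s
    rcases le_or_gt (c - r) (Nat.choose k' l) with he | he
    · -- e ≤ C(k',l)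
      have hmz : macaulay (l+1) z = Nat.choose (k'+1) (l+2) +
          macaulay l (Nat.choose k' l - (c - r)) := by
        have hz : z = Nat.choose k' (l+1) + (Nat.choose k' l - (c - r)) := by omega
        rw [hz]; exact mac_eq l k' _ (by omega) (by omega)
      have hBapp := hB n (Nat.choose k' l) (r + s) (Nat.choose k' l - (c - r))
        hCk'n (by omega) (by omega)
      omega
    · -- e > C(k',l)
      have hk'' : l + 1 ≤ k' := by
        by_contra h
        have h1 : k' = l := by omega
        have h2 : Nat.choose k' l = 1 := by rw [h1, Nat.choose_self]
        have h3 : Nat.choose (k'+1) (l+1) = 1 := by rw [h1, Nat.choose_self]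
        omega
      have hpure2 : macaulay (l+1) (Nat.choose k' (l+1)) = Nat.choose (k'+1) (l+2) :=
        mac_pure (l+1) k' (by omega) hk''
      have hA2 := hA (Nat.choose k' l) (r + s)
      have hs1 : Nat.choose k' l + (r + s) = s + r + Nat.choose k' l := by omega
      rw [hs1] at hA2
      have hx1lt : Nat.choose k' (l+1) < x := by omega
      have hIH := IH (Nat.choose k' (l+1)) hx1lt z (s + r + Nat.choose k' l)
        (c - r - Nat.choose k' l) (by omega) (by omega) (by omega)
        (by have := Nat.choose_le_choose (l+1) (show k' ≤ n by omega); omega)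
      omega

lemma Bstep (l n : ℕ) (hl : 1 ≤ l) (hA : StmtA l) (hB : StmtB l)
    (IHn : ∀ x y z, x ≤ Nat.choose n (l+1) → y ≤ Nat.choose n (l+1) →
      z + Nat.choose n (l+1) = x + y →
      macaulay (l+1) x + macaulay (l+1) y ≤
        macaulay (l+1) z + macaulay (l+1) (Nat.choose n (l+1))) :
    ∀ x y z, x ≤ y → y ≤ Nat.choose (n+1) (l+1) → z + Nat.choose (n+1) (l+1) = x + y →
      macaulay (l+1) x + macaulay (l+1) y ≤
        macaulay (l+1) z + macaulay (l+1) (Nat.choose (n+1) (l+1)) := by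
  intro x y z hxy hy hz
  have hNN : Nat.choose (n+1) (l+1) = Nat.choose n l + Nat.choose n (l+1) :=
    Nat.choose_succ_succ n l
  by_cases hyN : y = Nat.choose (n+1) (l+1)
  · have hzx : z = x := by omega
    rw [hzx, hyN]
  · have hylt : y < Nat.choose (n+1) (l+1) := by omega
    have hnl1 : l ≤ n := by
      by_contra h
      have : Nat.choose (n+1) (l+1) = 0 := Nat.choose_eq_zero_of_lt (by omega)
      omega
    have hpureM : macaulay l (Nat.choose n l) = Nat.choose (n+1) (l+1) :=
      mac_pure l n hl hnl1
    have hpureN' : macaulay (l+1) (Nat.choose (n+1) (l+1)) = Nat.choose (n+2) (l+2) :=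
      mac_pure (l+1) (n+1) (by omega) (by omega)
    have hNN2 : Nat.choose (n+2) (l+2) = Nat.choose (n+1) (l+1) + Nat.choose (n+1) (l+2) :=
      Nat.choose_succ_succ (n+1) (l+1)
    rcases le_or_gt (Nat.choose n (l+1)) y with hyge | hylt2
    · -- y ≥ N
      obtain ⟨s, hs⟩ : ∃ s, y = Nat.choose n (l+1) + s := ⟨y - Nat.choose n (l+1), by omega⟩
      have hsM : s < Nat.choose n l := by omega
      have hmy : macaulay (l+1) y = Nat.choose (n+1) (l+2) + macaulay l s := by
        rw [hs]; exact mac_eq l n s hnl1 hsM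
      have hD := Dlem l n hl hA hB x z s (Nat.choose n l - s) (by omega) (by omega)
        (by omega) (by omega)
      omega
    · -- x ≤ y < N
      have hnl2 : l + 1 ≤ n := by
        by_contra h
        have : Nat.choose n (l+1) = 0 := Nat.choose_eq_zero_of_lt (by omega)
        omega
      have hpureN : macaulay (l+1) (Nat.choose n (l+1)) = Nat.choose (n+1) (l+2) :=
        mac_pure (l+1) n (by omega) hnl2
      have hIB := IHn x y (z + Nat.choose n l) (by omega) (by omega) (by omega)
      have hMpos : 0 < Nat.choose n l := Nat.choose_pos hnl1
      have hD := Dlem l n hl hA hB (z + Nat.choose n l) z 0 (Nat.choose n l)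
        (by omega) (by omega) (by omega) (by omega)
      have hz0 : macaulay l 0 = 0 := mac_zero l
      omega

lemma Bsucc (l : ℕ) (hl : 1 ≤ l) (hA : StmtA l) (hB : StmtB l) : StmtB (l+1) := by
  intro n
  induction n with
  | zero =>
    intro x y z hx hy hz
    have h0 : Nat.choose 0 (l+1) = 0 := Nat.choose_eq_zero_of_lt (by omega)
    have hx0 : x = 0 := by omega
    have hy0 : y = 0 := by omega
    have hz0 : z = 0 := by omega
    subst hx0; subst hy0; subst hz0
    exact le_refl _
  | succ n IHn =>
    intro x y z hx hy hz
    rcases le_total x y with hxy | hxy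
    · exact Bstep l n hl hA hB IHn x y z hxy hy hz
    · have := Bstep l n hl hA hB IHn y x z hxy hx (by omega)
      omega

lemma Flem (l : ℕ) (hl : 1 ≤ l) (hA : StmtA l) :
    ∀ k, l + 1 ≤ k → Nat.choose (k+1) (l+2) ≤ macaulay l (Nat.choose k (l+1)) := by
  intro k hk
  induction k, hk using Nat.le_induction with
  | base =>
    have h1 : Nat.choose (l+1) (l+1) = 1 := Nat.choose_self _
    have h2 : Nat.choose (l+2) (l+2) = 1 := Nat.choose_self _
    have h3 : macaulay l 1 = 1 := by
      have := mac_pure l l hl (le_refl l)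
      simpa [Nat.choose_self] using this
    rw [h1, h2, h3]
  | succ k hk IH =>
    have hsplit : Nat.choose (k+1) (l+1) = Nat.choose k l + Nat.choose k (l+1) :=
      Nat.choose_succ_succ k l
    have hsplit2 : Nat.choose (k+1+1) (l+2) = Nat.choose (k+1) (l+1) + Nat.choose (k+1) (l+2) :=
      Nat.choose_succ_succ (k+1) (l+1)
    have hAa := hA (Nat.choose k l) (Nat.choose k (l+1))
    have hp : macaulay l (Nat.choose k l) = Nat.choose (k+1) (l+1) :=
      mac_pure l k hl (by omega)
    rw [hsplit]
    omega

lemma Clem (l : ℕ) (hl : 1 ≤ l) (hA : StmtA l) :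
    ∀ x, macaulay (l+1) x ≤ macaulay l x := by
  intro x
  rcases Nat.eq_zero_or_pos x with rfl | hx
  · simp [mac_zero]
  · obtain ⟨k, r, hk, hr, hrep⟩ := exists_rep l x hx
    have hmx : macaulay (l+1) x = Nat.choose (k+1) (l+2) + macaulay l r := by
      rw [hrep]; exact mac_eq l k r (by omega) hr
    have hAa := hA (Nat.choose k (l+1)) r
    rw [← hrep] at hAa
    have hF := Flem l hl hA k hk
    omega

lemma Asucc (l : ℕ) (hl : 1 ≤ l) (hA : StmtA l) (hBs : StmtB (l+1))
    (hC : ∀ x, macaulay (l+1) x ≤ macaulay l x) : StmtA (l+1) := by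
  have key : ∀ x y, x ≤ y → macaulay (l+1) x + macaulay (l+1) y ≤ macaulay (l+1) (x+y) := by
    intro x
    induction x using Nat.strong_induction_on with
    | _ x IH =>
    intro y hxy
    rcases Nat.eq_zero_or_pos x with rfl | hx
    · simp [mac_zero]
    · have hy1 : 1 ≤ y := le_trans hx hxy
      obtain ⟨k, s, hk, hs, hrep⟩ := exists_rep l y hy1
      have hmy : macaulay (l+1) y = Nat.choose (k+1) (l+2) + macaulay l s := by
        rw [hrep]; exact mac_eq l k s (by omega) hs
      rcases lt_or_ge (x + s) (Nat.choose k l) with hcase | hcase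
      · have hxy' : x + y = Nat.choose k (l+1) + (x + s) := by omega
        have hmxy : macaulay (l+1) (x+y) = Nat.choose (k+1) (l+2) + macaulay l (x+s) := by
          rw [hxy']; exact mac_eq l k _ (by omega) hcase
        have h1 := hC x
        have h2 := hA x s
        omega
      · have hsplit : Nat.choose (k+1) (l+1) = Nat.choose k l + Nat.choose k (l+1) :=
          Nat.choose_succ_succ k l
        obtain ⟨w, hw⟩ : ∃ w, w + Nat.choose (k+1) (l+1) = x + y :=
          ⟨x + y - Nat.choose (k+1) (l+1), by omega⟩
        have hwx : w < x := by omega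
        have hBapp := hBs (k+1) x y w (by omega) (by omega) (by omega)
        have hIH := IH w hwx (Nat.choose (k+1) (l+1)) (by omega)
        rw [hw] at hIH
        omega
  intro x y
  rcases le_total x y with hxy | hxy
  · exact key x y hxy
  · have := key y x hxy
    rw [show y + x = x + y by omega] at this
    omega

lemma ABmain : ∀ l, 1 ≤ l → StmtA l ∧ StmtB l := by
  intro l hl
  induction l with
  | zero => omega
  | succ l IH =>
    rcases Nat.eq_zero_or_pos l with rfl | hl'
    · exact ⟨A1, B1⟩
    · obtain ⟨hA, hB⟩ := IH hl'
      have hBs := Bsucc l hl' hA hB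
      exact ⟨Asucc l hl' hA hBs (Clem l hl' hA), hBs⟩

lemma mac_mono (l : ℕ) (hA : StmtA l) {a b : ℕ} (h : a ≤ b) :
    macaulay l a ≤ macaulay l b := by
  have := hA a (b - a)
  rw [show a + (b - a) = b by omega] at this
  omega

lemma merge_lemma (l n : ℕ) (hA : StmtA l) (hB : StmtB l) :
    ∀ t (a : Fin t → ℕ), (∀ i, a i ≤ Nat.choose n l) →
    ∃ q r, r ≤ Nat.choose n l ∧ q * Nat.choose n l + r = ∑ i, a i ∧
      ∑ i, macaulay l (a i) ≤ q * macaulay l (Nat.choose n l) + macaulay l r := by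
  intro t
  induction t with
  | zero => intro a _; exact ⟨0, 0, by simp [mac_zero]⟩
  | succ t IH =>
    intro a ha
    obtain ⟨q, r, hr, hsum, hmac⟩ := IH (fun i => a i.succ) (fun i => ha i.succ)
    have hsum' : q * Nat.choose n l + r = ∑ i : Fin t, a i.succ := hsum
    have hmac' : ∑ i : Fin t, macaulay l (a i.succ) ≤
        q * macaulay l (Nat.choose n l) + macaulay l r := hmac
    simp only [Fin.sum_univ_succ]
    rcases le_or_gt (a 0 + r) (Nat.choose n l) with h | h
    · refine ⟨q, a 0 + r, h, by omega, ?_⟩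
      have h2 := hA (a 0) r
      omega
    · obtain ⟨z, hz⟩ : ∃ z, z + Nat.choose n l = a 0 + r :=
        ⟨a 0 + r - Nat.choose n l, by omega⟩
      have ha0 : a 0 ≤ Nat.choose n l := ha 0
      have hBapp := hB n (a 0) r z ha0 hr hz
      have e1 : (q+1) * Nat.choose n l = q * Nat.choose n l + Nat.choose n l := by ring
      have e2 : (q+1) * macaulay l (Nat.choose n l) =
          q * macaulay l (Nat.choose n l) + macaulay l (Nat.choose n l) := by ring
      exact ⟨q + 1, z, by omega, by omega, by omega⟩

/-- Let `m` and `d` be positive integers. Suppose `a 0 ≤ a 1 ≤ ⋯ ≤ a (t-1)` and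
`b 0, …, b (s-1)` are sequences of nonnegative integers such that
`b 0 ≤ b 1 = ⋯ = b (s-1) = C(m - 1 + d, d)` and `b (s-1) ≥ a i` for all `i`.
If `a 0 + ⋯ + a (t-1) ≤ b 0 + ⋯ + b (s-1)`, then
`(a 0)^{⟨d⟩} + ⋯ + (a (t-1))^{⟨d⟩} ≤ (b 0)^{⟨d⟩} + ⋯ + (b (s-1))^{⟨d⟩}`. -/
theorem macaulay_sum_le_of_seq (m d t s : ℕ) (hm : 0 < m) (hd : 0 < d)
    (ht : 0 < t) (hs : 0 < s) (a : Fin t → ℕ) (b : Fin s → ℕ)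
    (hamono : Monotone a)
    (hb0 : b ⟨0, hs⟩ ≤ Nat.choose (m - 1 + d) d)
    (hbconst : ∀ i : Fin s, 0 < (i : ℕ) → b i = Nat.choose (m - 1 + d) d)
    (hab : ∀ i : Fin t, a i ≤ b ⟨s - 1, Nat.sub_lt hs one_pos⟩)
    (hsum : ∑ i, a i ≤ ∑ i, b i) :
    ∑ i, macaulay d (a i) ≤ ∑ i, macaulay d (b i) := by
  obtain ⟨hA, hB⟩ := ABmain d hd
  set n := m - 1 + d with hn
  have hdn : d ≤ n := by omega
  have hN1 : 1 ≤ Nat.choose n d := Nat.choose_pos hdn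
  obtain ⟨s', rfl⟩ : ∃ s', s = s' + 1 := ⟨s - 1, by omega⟩
  have h00 : (⟨0, hs⟩ : Fin (s' + 1)) = 0 := by ext; simp
  rw [h00] at hb0
  have hb_le : ∀ j : Fin (s' + 1), b j ≤ Nat.choose n d := by
    intro j
    rcases Nat.eq_zero_or_pos (j : ℕ) with h0 | hpos
    · have hj : j = 0 := by ext; simp [h0]
      rw [hj]; exact hb0
    · rw [hbconst j hpos]
  have haN : ∀ i, a i ≤ Nat.choose n d := fun i => le_trans (hab i) (hb_le _)
  have htail : ∀ i : Fin s', b i.succ = Nat.choose n d := fun i => hbconst i.succ (by simp)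
  have hbsum : ∑ i, b i = b 0 + s' * Nat.choose n d := by
    rw [Fin.sum_univ_succ]
    congr 1
    rw [Finset.sum_congr rfl (fun i _ => htail i)]
    simp [mul_comm]
  have hbmacsum : ∑ i, macaulay d (b i) =
      macaulay d (b 0) + s' * macaulay d (Nat.choose n d) := by
    rw [Fin.sum_univ_succ (f := fun i => macaulay d (b i))]
    congr 1
    rw [Finset.sum_congr rfl (fun i _ => by rw [htail i])]
    simp [mul_comm]
  obtain ⟨q, r, hrN, hqr, hmle⟩ := merge_lemma d n hA hB t a haN
  have hble : q * Nat.choose n d + r ≤ b 0 + s' * Nat.choose n d := by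
    rw [hqr]
    rw [hbsum] at hsum
    exact hsum
  rw [hbmacsum]
  refine le_trans hmle ?_
  have hmono1 : macaulay d r ≤ macaulay d (Nat.choose n d) := mac_mono d hA hrN
  rcases lt_trichotomy q s' with h | h | h
  · have e1 : (q+1) * macaulay d (Nat.choose n d) =
        q * macaulay d (Nat.choose n d) + macaulay d (Nat.choose n d) := by ring
    have e2 : (q+1) * macaulay d (Nat.choose n d) ≤ s' * macaulay d (Nat.choose n d) :=
      Nat.mul_le_mul_right _ (by omega)
    omega
  · subst h
    have hrb : r ≤ b 0 := by omega
    have := mac_mono d hA hrb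
    omega
  · have h1 : (s'+1) * Nat.choose n d ≤ q * Nat.choose n d :=
      Nat.mul_le_mul_right _ (by omega)
    have h2 : (s'+1) * Nat.choose n d = s' * Nat.choose n d + Nat.choose n d := by ring
    have hb0N : b 0 ≤ Nat.choose n d := hb_le 0
    have hr0 : r = 0 := by omega
    have hb0eq : b 0 = Nat.choose n d := by omega
    have hq : q = s' + 1 := by
      by_contra hq
      have h3 : (s'+2) * Nat.choose n d ≤ q * Nat.choose n d :=
        Nat.mul_le_mul_right _ (by omega)
      have h4 : (s'+2) * Nat.choose n d =
          s' * Nat.choose n d + Nat.choose n d + Nat.choose n d := by ring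
      omega
    subst hq
    rw [hr0, hb0eq, mac_zero]
    have e3 : (s'+1) * macaulay d (Nat.choose n d) =
        macaulay d (Nat.choose n d) + s' * macaulay d (Nat.choose n d) := by ring
    omega
end
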